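/- For a finite set Y, a reference distribution π_ref on Y with full support, a reward function R : Y → ℝ, and β > 0, the maximizer over distributions π on Y of E_{y∼π}[R(y)] − β·KL(π‖π_ref) equals the maximizer over π of the min over all perturbations ΔR : Y → ℝ satisfying Σ_y π_ref(y)·exp(ΔR(y)/β) ≤ 1 of E_{y∼π}[R(y) − ΔR(y)]. That is, KL-regularized reward maximization is equivalent to a robust (max-min) optimization over the exponential-constraint perturbation set. -/

import Mathlib

open Finset Real

lemma pointwise_ineq (q c s : ℝ) (hq : 0 ≤ q) (hc : 0 < c) :
    q * s ≤ q * Real.log (q / c) - q + c * Real.exp s := by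
  rcases eq_or_lt_of_le hq with h | h
  · rw [← h]
    simp
    positivity
  · have h1 := Real.add_one_le_exp (s - Real.log (q / c))
    have h2 : Real.exp (s - Real.log (q / c)) = Real.exp s * (c / q) := by
      rw [Real.exp_sub, Real.exp_log (by positivity)]
      field_simp
    rw [h2] at h1
    have h3 := mul_le_mul_of_nonneg_left h1 hq
    have h4 : q * (Real.exp s * (c / q)) = c * Real.exp s := by
      field_simp
    nlinarith

lemma sum_q_dr_le {Y : Type} [Fintype Y] (pref q : Y → ℝ) (href : ∀ y, 0 < pref y)
    (hq0 : ∀ y, 0 ≤ q y) (hq1 : ∑ y, q y = 1) (β : ℝ) (hβ : 0 < β)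
    (f : Y → ℝ) (hf : ∑ y, pref y * Real.exp (f y / β) ≤ 1) :
    ∑ y, q y * f y ≤ β * ∑ y, q y * Real.log (q y / pref y) := by
  have h : ∑ y, q y * (f y / β)
      ≤ ∑ y, (q y * Real.log (q y / pref y) - q y + pref y * Real.exp (f y / β)) :=
    Finset.sum_le_sum fun y _ => pointwise_ineq (q y) (pref y) (f y / β) (hq0 y) (href y)
  have hsplit : ∑ y, (q y * Real.log (q y / pref y) - q y + pref y * Real.exp (f y / β))
      = (∑ y, q y * Real.log (q y / pref y)) - (∑ y, q y) + ∑ y, pref y * Real.exp (f y / β) := by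
    rw [Finset.sum_add_distrib, Finset.sum_sub_distrib]
  have hleft : ∑ y, q y * (f y / β) = (∑ y, q y * f y) / β := by
    rw [Finset.sum_div]
    congr 1; ext y; ring
  rw [hsplit, hleft, hq1] at h
  have : (∑ y, q y * f y) / β ≤ ∑ y, q y * Real.log (q y / pref y) := by linarith
  calc ∑ y, q y * f y = β * ((∑ y, q y * f y) / β) := by field_simp
    _ ≤ β * ∑ y, q y * Real.log (q y / pref y) := by
        exact mul_le_mul_of_nonneg_left this hβ.le

lemma inf_eq {Y : Type} [Fintype Y] [Nonempty Y] (pref : Y → ℝ) (href : ∀ y, 0 < pref y)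
    (hrefsum : ∑ y, pref y = 1) (R : Y → ℝ) (β : ℝ) (hβ : 0 < β)
    (q : Y → ℝ) (hq0 : ∀ y, 0 ≤ q y) (hq1 : ∑ y, q y = 1) :
    (⨅ ΔR : {f : Y → ℝ // ∑ y, pref y * Real.exp (f y / β) ≤ 1},
        ∑ y, q y * (R y - ΔR.1 y))
      = (∑ y, q y * R y) - β * ∑ y, q y * Real.log (q y / pref y) := by
  haveI hne : Nonempty {f : Y → ℝ // ∑ y, pref y * Real.exp (f y / β) ≤ 1} :=
    ⟨⟨0, by simp [hrefsum]⟩⟩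
  have hlb : ∀ ΔR : {f : Y → ℝ // ∑ y, pref y * Real.exp (f y / β) ≤ 1},
      (∑ y, q y * R y) - β * ∑ y, q y * Real.log (q y / pref y)
        ≤ ∑ y, q y * (R y - ΔR.1 y) := by
    rintro ⟨f, hf⟩
    have h := sum_q_dr_le pref q href hq0 hq1 β hβ f hf
    have hsum : ∑ y, q y * (R y - f y) = (∑ y, q y * R y) - ∑ y, q y * f y := by
      rw [← Finset.sum_sub_distrib]; congr 1; ext y; ring
    rw [hsum]; linarith
  have hbdd : BddBelow (Set.range fun ΔR : {f : Y → ℝ // ∑ y, pref y * Real.exp (f y / β) ≤ 1} =>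
      ∑ y, q y * (R y - ΔR.1 y)) := by
    exact ⟨_, by rintro x ⟨ΔR, rfl⟩; exact hlb ΔR⟩
  apply le_antisymm
  · -- inf ≤ target, via the family δ ↦ f_δ
    set T := (∑ y, q y * R y) - β * ∑ y, q y * Real.log (q y / pref y) with hT
    have key : ∀ δ ∈ Set.Ioo (0:ℝ) 1,
        (⨅ ΔR : {f : Y → ℝ // ∑ y, pref y * Real.exp (f y / β) ≤ 1},
          ∑ y, q y * (R y - ΔR.1 y))
        ≤ ∑ y, q y * (R y - β * Real.log (((1 - δ) * q y + δ * pref y) / pref y)) := by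
      intro δ hδ
      have hmem : ∑ y, pref y * Real.exp ((β * Real.log (((1 - δ) * q y + δ * pref y) / pref y)) / β) ≤ 1 := by
        have : ∀ y, pref y * Real.exp ((β * Real.log (((1 - δ) * q y + δ * pref y) / pref y)) / β)
            = (1 - δ) * q y + δ * pref y := by
          intro y
          have hm : 0 < (1 - δ) * q y + δ * pref y := by
            have := hq0 y
            have := href y
            nlinarith [hδ.1, hδ.2]
          rw [mul_div_cancel_left₀ _ hβ.ne', Real.exp_log (div_pos hm (href y))]
          field_simp
          exact mul_div_cancel_left₀ _ (href y).ne'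
        rw [Finset.sum_congr rfl fun y _ => this y, Finset.sum_add_distrib,
          ← Finset.mul_sum, ← Finset.mul_sum, hq1, hrefsum]
        simp
      exact ciInf_le hbdd ⟨fun y => β * Real.log (((1 - δ) * q y + δ * pref y) / pref y), hmem⟩
    have hTeq : T = ∑ y, q y * (R y - β * Real.log (q y / pref y)) := by
      rw [hT, Finset.mul_sum, ← Finset.sum_sub_distrib]
      congr 1; ext y; ring
    have htend : Filter.Tendsto
        (fun δ : ℝ => ∑ y, q y * (R y - β * Real.log (((1 - δ) * q y + δ * pref y) / pref y)))
        (nhdsWithin 0 (Set.Ioi 0)) (nhds T) := by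
      rw [hTeq]
      apply tendsto_finset_sum
      intro y _
      rcases eq_or_lt_of_le (hq0 y) with h0 | h0
      · simp [← h0]
      · have hcont : Filter.Tendsto
            (fun δ : ℝ => ((1 - δ) * q y + δ * pref y) / pref y)
            (nhds 0) (nhds (q y / pref y)) := by
          have : Filter.Tendsto (fun δ : ℝ => ((1 - δ) * q y + δ * pref y)) (nhds 0)
              (nhds (q y)) := by
            have hc : Continuous (fun δ : ℝ => (1 - δ) * q y + δ * pref y) := by
              continuity
            have h2 := hc.tendsto (0:ℝ)
            simpa using h2
          exact this.div_const _
        have hlog : Filter.Tendsto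
            (fun δ : ℝ => Real.log (((1 - δ) * q y + δ * pref y) / pref y))
            (nhds 0) (nhds (Real.log (q y / pref y))) := by
          exact (Real.continuousAt_log (div_pos h0 (href y)).ne').tendsto.comp hcont
        have hfin : Filter.Tendsto
            (fun δ : ℝ => q y * (R y - β * Real.log (((1 - δ) * q y + δ * pref y) / pref y)))
            (nhds 0) (nhds (q y * (R y - β * Real.log (q y / pref y)))) :=
          ((tendsto_const_nhds (x := R y)).sub (hlog.const_mul β)).const_mul (q y)
        exact hfin.mono_left nhdsWithin_le_nhds
    refine ge_of_tendsto htend ?_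
    filter_upwards [Ioo_mem_nhdsGT_of_mem (by norm_num : (0:ℝ) ∈ Set.Ico (0:ℝ) 1)] with δ hδ
    exact key δ hδ
  · exact le_ciInf hlb

/-- KL-regularized reward maximization is equivalent (same maximizer set over
distributions) to robust max-min optimization over the exponential-constraint perturbation set. -/
theorem kl_regularized_eq_robust_argmax
    (Y : Type) [Fintype Y] [Nonempty Y]
    (pref : Y → ℝ) (href : ∀ y, 0 < pref y) (hrefsum : ∑ y, pref y = 1)
    (R : Y → ℝ) (β : ℝ) (hβ : 0 < β) :
    {p : Y → ℝ | ((∀ y, 0 ≤ p y) ∧ ∑ y, p y = 1) ∧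
      ∀ q : Y → ℝ, ((∀ y, 0 ≤ q y) ∧ ∑ y, q y = 1) →
        (∑ y, q y * R y) - β * ∑ y, q y * Real.log (q y / pref y)
          ≤ (∑ y, p y * R y) - β * ∑ y, p y * Real.log (p y / pref y)} =
    {p : Y → ℝ | ((∀ y, 0 ≤ p y) ∧ ∑ y, p y = 1) ∧
      ∀ q : Y → ℝ, ((∀ y, 0 ≤ q y) ∧ ∑ y, q y = 1) →
        (⨅ ΔR : {f : Y → ℝ // ∑ y, pref y * Real.exp (f y / β) ≤ 1},
            ∑ y, q y * (R y - ΔR.1 y))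
          ≤ ⨅ ΔR : {f : Y → ℝ // ∑ y, pref y * Real.exp (f y / β) ≤ 1},
            ∑ y, p y * (R y - ΔR.1 y)} := by
  ext p
  simp only [Set.mem_setOf_eq]
  constructor
  · rintro ⟨hp, h⟩
    refine ⟨hp, fun q hq => ?_⟩
    rw [inf_eq pref href hrefsum R β hβ q hq.1 hq.2,
      inf_eq pref href hrefsum R β hβ p hp.1 hp.2]
    exact h q hq
  · rintro ⟨hp, h⟩
    refine ⟨hp, fun q hq => ?_⟩
    have := h q hq
    rwa [inf_eq pref href hrefsum R β hβ q hq.1 hq.2,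
      inf_eq pref href hrefsum R β hβ p hp.1 hp.2] at this
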